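/- arXiv:2604.16819 — 3 statements merged into one kernel-verified Lean document; each statement's English description precedes it below -/
import Mathlib

section
/- Let z : [0,∞) → ℝ¹⁴ be differentiable and satisfy ż(t) = A z(t) + E d(t) for all t ≥ 0, where ‖d(t)‖ ≤ r̄ for all t ≥ 0. Set α = λ_min(Q), c = 2‖P·E‖, R = (c/α) r̄, and ρ* = λ_max(P) R². Then for every ρ ≥ ρ* and every t₀ ≥ 0 such that z(t₀) lies on the boundary level set V(z(t₀)) = ρ, the Lyapunov function is nonincreasing at t₀: d/dt [V(z(t))] evaluated at t = t₀ is ≤ 0. -/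
open Matrix Filter

noncomputable section

abbrev V14 := EuclideanSpace ℝ (Fin 14)
abbrev V3 := EuclideanSpace ℝ (Fin 3)

/-- Lyapunov function `V(z) = zᵀ P z`. -/
def lyapV (P : Matrix (Fin 14) (Fin 14) ℝ) (z : V14) : ℝ := z ⬝ᵥ P.mulVec z

/-- Right-hand side of the perturbed linear ODE `ż = A z + E d`, as an element of
Euclidean space. -/
def odeRHS (A : Matrix (Fin 14) (Fin 14) ℝ) (E : Matrix (Fin 14) (Fin 3) ℝ)
    (zt : V14) (dt : V3) : V14 := WithLp.toLp 2 (A.mulVec zt + E.mulVec dt)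

/-- Operator norm of the matrix product `P·E` viewed as a linear map `ℝ³ → ℝ¹⁴`
between Euclidean spaces. -/
def opPE (P : Matrix (Fin 14) (Fin 14) ℝ) (E : Matrix (Fin 14) (Fin 3) ℝ) : ℝ :=
  ‖LinearMap.toContinuousLinearMap (Matrix.toEuclideanLin (P * E))‖

/-- Smallest eigenvalue of a Hermitian (real symmetric) matrix. -/
def lamMin (Q : Matrix (Fin 14) (Fin 14) ℝ) (hQ : Q.IsHermitian) : ℝ := ⨅ i, hQ.eigenvalues i

/-- Largest eigenvalue of a Hermitian (real symmetric) matrix. -/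
def lamMax (P : Matrix (Fin 14) (Fin 14) ℝ) (hP : P.IsHermitian) : ℝ := ⨆ i, hP.eigenvalues i

lemma psd_helper {n : Type*} [Fintype n] [DecidableEq n] {M : Matrix n n ℝ}
    (hM : M.IsHermitian) {μ : ℝ} (h : ∀ i, μ ≤ hM.eigenvalues i) :
    (M - μ • 1).PosSemidef := by
  have hU : (hM.eigenvectorUnitary : Matrix n n ℝ) * star (hM.eigenvectorUnitary : Matrix n n ℝ)
      = 1 := Matrix.mem_unitaryGroup_iff.mp hM.eigenvectorUnitary.2
  have h2 : Matrix.diagonal (fun i => hM.eigenvalues i - μ) =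
      Matrix.diagonal (RCLike.ofReal ∘ hM.eigenvalues) - μ • (1 : Matrix n n ℝ) := by
    rw [← Matrix.diagonal_one, ← Matrix.diagonal_smul, ← Matrix.diagonal_sub]
    simp [Pi.smul_def]
  have h1 : M - μ • (1 : Matrix n n ℝ) =
      (hM.eigenvectorUnitary : Matrix n n ℝ) *
        Matrix.diagonal (fun i => hM.eigenvalues i - μ) *
        (star (hM.eigenvectorUnitary : Matrix n n ℝ)) := by
    rw [h2, Matrix.mul_sub, Matrix.sub_mul, Matrix.mul_smul, Matrix.mul_one, Matrix.smul_mul, hU,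
      ← Unitary.conjStarAlgAut_apply (S := ℝ), ← hM.spectral_theorem]
  rw [h1]
  have := Matrix.PosSemidef.mul_mul_conjTranspose_same
    (Matrix.posSemidef_diagonal_iff.mpr (fun i => sub_nonneg.2 (h i)))
    (hM.eigenvectorUnitary : Matrix n n ℝ)
  rwa [← Matrix.star_eq_conjTranspose] at this

lemma quad_ge {n : Type*} [Fintype n] [DecidableEq n] {M : Matrix n n ℝ}
    {μ : ℝ} (hpsd : (M - μ • 1).PosSemidef) (x : n → ℝ) :
    μ * (x ⬝ᵥ x) ≤ x ⬝ᵥ M *ᵥ x := by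
  have := hpsd.dotProduct_mulVec_nonneg x
  have hs : star x = x := by funext i; exact star_trivial _
  rw [hs, Matrix.sub_mulVec, Matrix.smul_mulVec, Matrix.one_mulVec,
    dotProduct_sub, dotProduct_smul] at this
  rw [smul_eq_mul] at this; linarith [this]

lemma psd_helper' {n : Type*} [Fintype n] [DecidableEq n] {M : Matrix n n ℝ}
    (hM : M.IsHermitian) {μ : ℝ} (h : ∀ i, hM.eigenvalues i ≤ μ) :
    (μ • 1 - M).PosSemidef := by
  have hU : (hM.eigenvectorUnitary : Matrix n n ℝ) * star (hM.eigenvectorUnitary : Matrix n n ℝ)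
      = 1 := Matrix.mem_unitaryGroup_iff.mp hM.eigenvectorUnitary.2
  have h2 : Matrix.diagonal (fun i => μ - hM.eigenvalues i) =
      μ • (1 : Matrix n n ℝ) - Matrix.diagonal (RCLike.ofReal ∘ hM.eigenvalues) := by
    rw [← Matrix.diagonal_one, ← Matrix.diagonal_smul, ← Matrix.diagonal_sub]
    simp [Pi.smul_def]
  have h1 : μ • (1 : Matrix n n ℝ) - M =
      (hM.eigenvectorUnitary : Matrix n n ℝ) *
        Matrix.diagonal (fun i => μ - hM.eigenvalues i) *
        (star (hM.eigenvectorUnitary : Matrix n n ℝ)) := by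
    rw [h2, Matrix.mul_sub, Matrix.sub_mul, Matrix.mul_smul, Matrix.mul_one, Matrix.smul_mul, hU,
      ← Unitary.conjStarAlgAut_apply (S := ℝ), ← hM.spectral_theorem]
  rw [h1]
  have := Matrix.PosSemidef.mul_mul_conjTranspose_same
    (Matrix.posSemidef_diagonal_iff.mpr (fun i => sub_nonneg.2 (h i)))
    (hM.eigenvectorUnitary : Matrix n n ℝ)
  rwa [← Matrix.star_eq_conjTranspose] at this

lemma quad_le {n : Type*} [Fintype n] [DecidableEq n] {M : Matrix n n ℝ}
    {μ : ℝ} (hpsd : (μ • 1 - M).PosSemidef) (x : n → ℝ) :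
    x ⬝ᵥ M *ᵥ x ≤ μ * (x ⬝ᵥ x) := by
  have := hpsd.dotProduct_mulVec_nonneg x
  have hs : star x = x := by funext i; exact star_trivial _
  rw [hs, Matrix.sub_mulVec, Matrix.smul_mulVec, Matrix.one_mulVec,
    dotProduct_sub, dotProduct_smul] at this
  rw [smul_eq_mul] at this; linarith [this]

lemma inner_dot {k : ℕ} (x y : EuclideanSpace ℝ (Fin k)) : (inner ℝ x y : ℝ) = x ⬝ᵥ y := by
  simp [PiLp.inner_apply, dotProduct, RCLike.inner_apply, mul_comm]

set_option maxHeartbeats 1000000 in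
/-- With `α = λ_min(Q)`, `c = 2‖P·E‖`, `R = (c/α) r̄`,
`ρ* = λ_max(P) R²`: for every `ρ ≥ ρ*` and every `t₀ ≥ 0` with `V(z(t₀)) = ρ`,
the Lyapunov function is nonincreasing at `t₀`: `d/dt V(z(t))|_{t = t₀} ≤ 0`. -/
theorem stmt5
    (A : Matrix (Fin 14) (Fin 14) ℝ) (E : Matrix (Fin 14) (Fin 3) ℝ)
    (P Q : Matrix (Fin 14) (Fin 14) ℝ) (hP : P.PosDef) (hQ : Q.PosDef)
    (hLyap : (-Q - (Aᵀ * P + P * A)).PosSemidef)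
    (rbar : ℝ) (hrbar : 0 ≤ rbar)
    (d : ℝ → V3) (hd : Continuous d) (hdbound : ∀ t, 0 ≤ t → ‖d t‖ ≤ rbar)
    (z : ℝ → V14)
    (hode : ∀ t, 0 ≤ t → HasDerivAt z (odeRHS A E (z t) (d t)) t)
    (α c R ρstar : ℝ)
    (hα : α = lamMin Q hQ.isHermitian) (hc : c = 2 * opPE P E)
    (hR : R = (c / α) * rbar) (hρstar : ρstar = lamMax P hP.isHermitian * R ^ 2) :
    ∀ ρ, ρstar ≤ ρ → ∀ t₀, 0 ≤ t₀ → lyapV P (z t₀) = ρ →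
      deriv (fun s => lyapV P (z s)) t₀ ≤ 0 := by
  intro ρ hρ t₀ ht₀ hzρ
  classical
  -- transpose symmetry
  have hPT : Pᵀ = P := by
    have := hP.isHermitian
    rwa [Matrix.IsHermitian, Matrix.conjTranspose_eq_transpose_of_trivial] at this
  -- derivative computation
  set T : V14 →L[ℝ] V14 := LinearMap.toContinuousLinearMap (Matrix.toEuclideanLin P) with hTdef
  set z' : V14 := odeRHS A E (z t₀) (d t₀) with hz'def
  have hz := hode t₀ ht₀
  have hTv : ∀ v : V14, T v = P *ᵥ v := fun v => by
    rw [hTdef]; exact congrArg WithLp.ofLp (Matrix.toEuclideanLin_apply P v)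
  have hTz : HasDerivAt (fun s => T (z s)) (T z') t₀ :=
    (T.hasFDerivAt).comp_hasDerivAt t₀ hz
  have hV : HasDerivAt (fun s => (inner ℝ (z s) (T (z s)) : ℝ))
      ((inner ℝ (z t₀) (T z') : ℝ) + (inner ℝ z' (T (z t₀)) : ℝ)) t₀ := hz.inner ℝ hTz
  have hEq : (fun s => lyapV P (z s)) = fun s => (inner ℝ (z s) (T (z s)) : ℝ) := by
    funext s; rw [inner_dot, hTv]; rfl
  have hVd : HasDerivAt (fun s => lyapV P (z s))
      ((z t₀) ⬝ᵥ (P *ᵥ z') + z' ⬝ᵥ (P *ᵥ (z t₀))) t₀ := by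
    rw [hEq]; convert hV using 1; simp only [inner_dot, hTv]
  rw [hVd.deriv]
  -- notation
  set x : Fin 14 → ℝ := (z t₀).ofLp with hxdef
  set w : Fin 3 → ℝ := (d t₀).ofLp with hwdef
  have hz'fun : z'.ofLp = A *ᵥ x + E *ᵥ w := rfl
  -- algebraic identity
  have e2 : x ᵥ* P = P *ᵥ x := by conv_lhs => rw [← hPT, Matrix.vecMul_transpose]
  have e1 : (A *ᵥ x) ⬝ᵥ (P *ᵥ x) = x ⬝ᵥ (Aᵀ *ᵥ (P *ᵥ x)) := by
    rw [Matrix.dotProduct_mulVec x Aᵀ, Matrix.vecMul_transpose]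
  have e3 : (E *ᵥ w) ⬝ᵥ (P *ᵥ x) = x ⬝ᵥ ((P * E) *ᵥ w) := by
    rw [← Matrix.mulVec_mulVec, Matrix.dotProduct_mulVec x P, e2, dotProduct_comm]
  have key : (z t₀) ⬝ᵥ (P *ᵥ z') + z' ⬝ᵥ (P *ᵥ (z t₀))
      = x ⬝ᵥ ((Aᵀ * P + P * A) *ᵥ x) + 2 * (x ⬝ᵥ (P * E) *ᵥ w) := by
    rw [show (z t₀).ofLp = x from rfl, hz'fun]
    simp only [Matrix.mulVec_add, dotProduct_add, add_dotProduct,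
      Matrix.add_mulVec, ← Matrix.mulVec_mulVec, e1, e3]
    ring
  rw [key]
  -- bounds
  set N : ℝ := ‖z t₀‖ with hN
  have hNnn : 0 ≤ N := norm_nonneg _
  have hxx : x ⬝ᵥ x = N ^ 2 := by
    rw [← inner_dot (z t₀) (z t₀), real_inner_self_eq_norm_sq]
  -- Lyapunov inequality bound
  have hlyapx := hLyap.dotProduct_mulVec_nonneg x
  have hsx : star x = x := by funext i; exact star_trivial _
  rw [hsx, Matrix.sub_mulVec, Matrix.neg_mulVec, dotProduct_sub,
    dotProduct_neg] at hlyapx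
  -- h1 : x ⬝ᵥ (AᵀP+PA) *ᵥ x ≤ - x ⬝ᵥ Q *ᵥ x
  have h1 : x ⬝ᵥ ((Aᵀ * P + P * A) *ᵥ x) ≤ -(x ⬝ᵥ Q *ᵥ x) := by linarith
  -- smallest eigenvalue bound for Q
  have hale : ∀ i, α ≤ hQ.isHermitian.eigenvalues i := fun i => by
    rw [hα, lamMin]; exact ciInf_le (Set.Finite.bddBelow (Set.finite_range _)) i
  have h2 : α * (x ⬝ᵥ x) ≤ x ⬝ᵥ Q *ᵥ x := quad_ge (psd_helper hQ.isHermitian hale) x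
  -- α positive
  have hapos : 0 < α := by
    obtain ⟨i, hi⟩ := exists_eq_ciInf_of_finite (f := fun i => hQ.isHermitian.eigenvalues i)
    rw [hα, lamMin, ← hi]
    exact hQ.eigenvalues_pos i
  -- operator norm bound
  set T2 : V3 →L[ℝ] V14 := LinearMap.toContinuousLinearMap (Matrix.toEuclideanLin (P * E))
    with hT2def
  have hT2v : T2 (d t₀) = (P * E) *ᵥ w := by
    rw [hT2def]; exact congrArg WithLp.ofLp (Matrix.toEuclideanLin_apply (P * E) (d t₀))
  have h3 : x ⬝ᵥ ((P * E) *ᵥ w) ≤ N * (opPE P E * rbar) := by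
    have := real_inner_le_norm (z t₀) (T2 (d t₀))
    rw [inner_dot, hT2v] at this
    refine this.trans ?_
    have hop := T2.le_opNorm (d t₀)
    have hopn : (0 : ℝ) ≤ ‖T2‖ := norm_nonneg _
    have hdb := hdbound t₀ ht₀
    have : ‖T2 (d t₀)‖ ≤ opPE P E * rbar := by
      refine hop.trans ?_
      rw [opPE, ← hT2def]
      exact mul_le_mul_of_nonneg_left hdb hopn
    exact mul_le_mul_of_nonneg_left this hNnn
  -- largest eigenvalue bound for P
  have hLle : ∀ i, hP.isHermitian.eigenvalues i ≤ lamMax P hP.isHermitian := fun i => by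
    rw [lamMax]; exact le_ciSup (Set.Finite.bddAbove (Set.finite_range _)) i
  have h5 : ρ ≤ lamMax P hP.isHermitian * N ^ 2 := by
    rw [← hzρ]
    have := quad_le (psd_helper' hP.isHermitian hLle) x
    rw [hxx] at this
    exact this
  have hLpos : 0 < lamMax P hP.isHermitian := by
    obtain ⟨i, hi⟩ := exists_eq_ciSup_of_finite (f := fun i => hP.isHermitian.eigenvalues i)
    rw [lamMax, ← hi]
    exact hP.eigenvalues_pos i
  -- R ≤ N
  have hcnn : 0 ≤ c := by rw [hc, opPE]; positivity
  have hRnn : 0 ≤ R := by rw [hR]; positivity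
  have hRsq : R ^ 2 ≤ N ^ 2 := by
    have : lamMax P hP.isHermitian * R ^ 2 ≤ lamMax P hP.isHermitian * N ^ 2 := by
      rw [← hρstar]; exact le_trans hρ h5
    exact le_of_mul_le_mul_left this hLpos
  have hRN : R ≤ N := by
    nlinarith [hRsq, hRnn, hNnn]
  have haR : α * R = c * rbar := by
    rw [hR]; field_simp
  -- final arithmetic
  rw [hxx] at h2
  have hstep : c * rbar ≤ α * N := by
    rw [← haR]; exact mul_le_mul_of_nonneg_left hRN hapos.le
  calc x ⬝ᵥ ((Aᵀ * P + P * A) *ᵥ x) + 2 * (x ⬝ᵥ (P * E) *ᵥ w)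
      ≤ -(α * N ^ 2) + 2 * (N * (opPE P E * rbar)) := by linarith
    _ = -(α * N ^ 2) + N * (c * rbar) := by rw [hc]; ring
    _ ≤ -(α * N ^ 2) + N * (α * N) := by
        have := mul_le_mul_of_nonneg_left hstep hNnn
        linarith
    _ = 0 := by ring
end
end

section
/- Let z : [0,∞) → ℝ¹⁴ be differentiable and satisfy ż(t) = A z(t) + E d(t) for all t ≥ 0, where ‖d(t)‖ ≤ r̄ for all t ≥ 0. Set α = λ_min(Q), c = 2‖P·E‖, R = (c/α) r̄, and ρ* = λ_max(P) R². Then for every ρ > ρ*, the trajectory enters the sublevel set Z_ρ = {z : V(z) ≤ ρ} in finite time: there exists T ≥ 0 such that V(z(T)) ≤ ρ. -/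
open Matrix Filter

noncomputable section

open scoped RealInnerProductSpace

lemma quadForm_eq_sum {m : ℕ} {M : Matrix (Fin m) (Fin m) ℝ} (hM : M.IsHermitian)
    (x : EuclideanSpace ℝ (Fin m)) :
    x ⬝ᵥ M.mulVec x = ∑ i, hM.eigenvalues i * (⟪hM.eigenvectorBasis i, x⟫ : ℝ)^2 := by
  classical
  have hsym : (Matrix.toEuclideanLin M).IsSymmetric :=
    (Matrix.isHermitian_iff_isSymmetric).1 hM
  set b := hM.eigenvectorBasis with hb
  have h0 : x ⬝ᵥ M.mulVec x = ⟪x, (Matrix.toEuclideanLin M) x⟫ := by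
    simp [Matrix.toEuclideanLin_apply, PiLp.inner_apply, dotProduct, RCLike.inner_apply,
      mul_comm]
  have hTb : ∀ i, (Matrix.toEuclideanLin M) (b i) = hM.eigenvalues i • b i := by
    intro i
    have h := hM.mulVec_eigenvectorBasis i
    apply (WithLp.equiv 2 _).injective
    simpa [Matrix.toEuclideanLin_apply] using h
  rw [h0, ← b.sum_inner_mul_inner x ((Matrix.toEuclideanLin M) x)]
  refine Finset.sum_congr rfl fun i _ => ?_
  have h1 : ⟪b i, (Matrix.toEuclideanLin M) x⟫ = hM.eigenvalues i * ⟪b i, x⟫ := by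
    rw [← hsym (b i) x, hTb i, real_inner_smul_left]
  rw [h1, real_inner_comm x (b i)]
  ring

lemma norm_sq_eq_sum_inner {m : ℕ} (b : OrthonormalBasis (Fin m) ℝ (EuclideanSpace ℝ (Fin m)))
    (x : EuclideanSpace ℝ (Fin m)) :
    ‖x‖ ^ 2 = ∑ i, (⟪b i, x⟫ : ℝ) ^ 2 := by
  have := b.sum_inner_mul_inner x x
  rw [real_inner_self_eq_norm_sq] at this
  rw [← this]
  refine Finset.sum_congr rfl fun i _ => ?_
  rw [real_inner_comm x (b i)]; ring

lemma iInf_le_quadForm {m : ℕ} [NeZero m] {M : Matrix (Fin m) (Fin m) ℝ} (hM : M.IsHermitian)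
    (x : EuclideanSpace ℝ (Fin m)) :
    (⨅ i, hM.eigenvalues i) * ‖x‖ ^ 2 ≤ x ⬝ᵥ M.mulVec x := by
  rw [quadForm_eq_sum hM x, norm_sq_eq_sum_inner hM.eigenvectorBasis x, Finset.mul_sum]
  refine Finset.sum_le_sum fun i _ => ?_
  exact mul_le_mul_of_nonneg_right (ciInf_le (Finite.bddBelow_range _) i) (sq_nonneg _)

lemma quadForm_le_iSup {m : ℕ} [NeZero m] {M : Matrix (Fin m) (Fin m) ℝ} (hM : M.IsHermitian)
    (x : EuclideanSpace ℝ (Fin m)) :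
    x ⬝ᵥ M.mulVec x ≤ (⨆ i, hM.eigenvalues i) * ‖x‖ ^ 2 := by
  rw [quadForm_eq_sum hM x, norm_sq_eq_sum_inner hM.eigenvectorBasis x, Finset.mul_sum]
  refine Finset.sum_le_sum fun i _ => ?_
  exact mul_le_mul_of_nonneg_right (le_ciSup (Finite.bddAbove_range _) i) (sq_nonneg _)

lemma dotProduct_le_norm_mul_norm {m : ℕ} (x y : EuclideanSpace ℝ (Fin m)) :
    x ⬝ᵥ y ≤ ‖x‖ * ‖y‖ := by
  have h := real_inner_le_norm x y
  have h2 : ⟪x, y⟫ = x ⬝ᵥ y := by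
    simp [PiLp.inner_apply, dotProduct, RCLike.inner_apply, mul_comm]
  linarith [h, h2.ge]

lemma cross_bound (P : Matrix (Fin 14) (Fin 14) ℝ) (E : Matrix (Fin 14) (Fin 3) ℝ)
    (x : V14) (v : V3) : x ⬝ᵥ ((P * E) *ᵥ v) ≤ ‖x‖ * (opPE P E * ‖v‖) := by
  have h : ‖Matrix.toEuclideanLin (P * E) v‖ ≤ opPE P E * ‖v‖ := by
    simpa [opPE] using
      (LinearMap.toContinuousLinearMap (Matrix.toEuclideanLin (P * E))).le_opNorm v
  have h0 : x ⬝ᵥ ((P * E) *ᵥ v) = ⟪x, Matrix.toEuclideanLin (P * E) v⟫ := by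
    simp [Matrix.toEuclideanLin_apply, PiLp.inner_apply, dotProduct, RCLike.inner_apply,
      mul_comm]
  calc x ⬝ᵥ ((P * E) *ᵥ v) = ⟪x, Matrix.toEuclideanLin (P * E) v⟫ := h0
    _ ≤ ‖x‖ * ‖Matrix.toEuclideanLin (P * E) v‖ := real_inner_le_norm _ _
    _ ≤ ‖x‖ * (opPE P E * ‖v‖) := by
        exact mul_le_mul_of_nonneg_left h (norm_nonneg _)

lemma lyapV_eq_inner (P : Matrix (Fin 14) (Fin 14) ℝ) (x : V14) :
    lyapV P x = ⟪x, (LinearMap.toContinuousLinearMap (Matrix.toEuclideanLin P)) x⟫ := by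
  simp [lyapV, Matrix.toEuclideanLin_apply, PiLp.inner_apply, dotProduct, RCLike.inner_apply,
    mul_comm]

lemma deriv_quad_identity (P A : Matrix (Fin 14) (Fin 14) ℝ) (E : Matrix (Fin 14) (Fin 3) ℝ)
    (hPsym : Pᵀ = P) (x : V14) (v : V3) :
    (⟪x, (LinearMap.toContinuousLinearMap (Matrix.toEuclideanLin P)) (odeRHS A E x v)⟫ : ℝ)
      + ⟪odeRHS A E x v, (LinearMap.toContinuousLinearMap (Matrix.toEuclideanLin P)) x⟫
    = x ⬝ᵥ ((Aᵀ * P + P * A) *ᵥ x) + 2 * (x ⬝ᵥ ((P * E) *ᵥ v)) := by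
  have hinner : ∀ a b : V14,
      (⟪a, (LinearMap.toContinuousLinearMap (Matrix.toEuclideanLin P)) b⟫ : ℝ)
        = a ⬝ᵥ (P *ᵥ b) := by
    intro a b
    simp [Matrix.toEuclideanLin_apply, PiLp.inner_apply, dotProduct, RCLike.inner_apply,
      mul_comm]
  have hx' : (odeRHS A E x v : Fin 14 → ℝ) = A *ᵥ x + E *ᵥ v := rfl
  rw [hinner, hinner, hx']
  have h1 : x ⬝ᵥ (P *ᵥ (A *ᵥ x + E *ᵥ v))
      = x ⬝ᵥ ((P * A) *ᵥ x) + x ⬝ᵥ ((P * E) *ᵥ v) := by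
    rw [Matrix.mulVec_add, dotProduct_add, Matrix.mulVec_mulVec, Matrix.mulVec_mulVec]
  have h2 : (A *ᵥ x + E *ᵥ v) ⬝ᵥ (P *ᵥ x)
      = x ⬝ᵥ ((Aᵀ * P) *ᵥ x) + x ⬝ᵥ ((P * E) *ᵥ v) := by
    rw [add_dotProduct]
    congr 1
    · rw [dotProduct_comm, Matrix.dotProduct_mulVec, ← Matrix.mulVec_transpose,
        Matrix.mulVec_mulVec]
      rw [dotProduct_comm, Matrix.dotProduct_mulVec, ← Matrix.mulVec_transpose,
        Matrix.transpose_mul, Matrix.transpose_transpose, hPsym]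
    · rw [Matrix.dotProduct_mulVec, ← Matrix.mulVec_transpose, hPsym,
        Matrix.mulVec_mulVec, dotProduct_comm]
  rw [h1, h2, Matrix.add_mulVec, dotProduct_add]
  ring

/-- With `α = λ_min(Q)`, `c = 2‖P·E‖`, `R = (c/α) r̄`,
`ρ* = λ_max(P) R²`: for every `ρ > ρ*`, the trajectory enters the sublevel set
`Z_ρ = {z : V(z) ≤ ρ}` in finite time: there exists `T ≥ 0` with `V(z(T)) ≤ ρ`. -/
theorem stmt7
    (A : Matrix (Fin 14) (Fin 14) ℝ) (E : Matrix (Fin 14) (Fin 3) ℝ)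
    (P Q : Matrix (Fin 14) (Fin 14) ℝ) (hP : P.PosDef) (hQ : Q.PosDef)
    (hLyap : (-Q - (Aᵀ * P + P * A)).PosSemidef)
    (rbar : ℝ) (hrbar : 0 ≤ rbar)
    (d : ℝ → V3) (hd : Continuous d) (hdbound : ∀ t, 0 ≤ t → ‖d t‖ ≤ rbar)
    (z : ℝ → V14)
    (hode : ∀ t, 0 ≤ t → HasDerivAt z (odeRHS A E (z t) (d t)) t)
    (α c R ρstar : ℝ)
    (hα : α = lamMin Q hQ.isHermitian) (hc : c = 2 * opPE P E)
    (hR : R = (c / α) * rbar) (hρstar : ρstar = lamMax P hP.isHermitian * R ^ 2) :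
    ∀ ρ, ρstar < ρ → ∃ T, 0 ≤ T ∧ lyapV P (z T) ≤ ρ := by
  intro ρ hρρ
  by_contra hcon
  push_neg at hcon
  set L := LinearMap.toContinuousLinearMap (Matrix.toEuclideanLin P) with hLdef
  have hPsym : Pᵀ = P := by
    rw [← Matrix.conjTranspose_eq_transpose_of_trivial]; exact hP.isHermitian
  have hα0 : 0 < α := by
    obtain ⟨i, hi⟩ := exists_eq_ciInf_of_finite (f := fun i => hQ.isHermitian.eigenvalues i)
    rw [hα, lamMin, ← hi]
    exact hQ.eigenvalues_pos i
  have hlM0 : 0 < lamMax P hP.isHermitian := by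
    have h := le_ciSup (Finite.bddAbove_range fun i => hP.isHermitian.eigenvalues i)
      (⟨0, by norm_num⟩ : Fin 14)
    exact lt_of_lt_of_le (hP.eigenvalues_pos _) h
  have hc0 : 0 ≤ c := by rw [hc, opPE]; positivity
  have hR0 : 0 ≤ R := by
    rw [hR]; exact mul_nonneg (div_nonneg hc0 hα0.le) hrbar
  have hαR : α * R = c * rbar := by rw [hR]; field_simp
  have hρstar0 : 0 ≤ ρstar := by
    rw [hρstar]; exact mul_nonneg hlM0.le (sq_nonneg _)
  have hρ0 : 0 < ρ := lt_of_le_of_lt hρstar0 hρρ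
  set lM := lamMax P hP.isHermitian with hlMdef
  set s := Real.sqrt (ρ / lM) with hsdef
  have hs2 : s ^ 2 = ρ / lM := Real.sq_sqrt (by positivity)
  have hs0 : 0 < s := Real.sqrt_pos.2 (by positivity)
  have hRs : R < s := by
    have h1 : lM * s ^ 2 = ρ := by
      rw [hs2]; field_simp
    have h2 : R ^ 2 < s ^ 2 := by
      rw [hρstar] at hρρ
      have := hρρ.trans_eq h1.symm
      exact lt_of_mul_lt_mul_left this hlM0.le
    nlinarith [hs0, hR0]
  set ε := α * (s * (s - R)) with hεdef
  have hε0 : 0 < ε := mul_pos hα0 (mul_pos hs0 (sub_pos.2 hRs))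
  have hznorm : ∀ t, 0 ≤ t → s < ‖z t‖ := by
    intro t ht
    have h1 : lyapV P (z t) ≤ lM * ‖z t‖ ^ 2 := quadForm_le_iSup hP.isHermitian (z t)
    have h2 := hcon t ht
    have h3 : s ^ 2 < ‖z t‖ ^ 2 := by
      rw [hs2, div_lt_iff₀ hlM0]
      nlinarith
    nlinarith [norm_nonneg (z t), hs0]
  have hgder : ∀ t, 0 ≤ t → HasDerivAt (fun u => lyapV P (z u) + ε * u)
      ((⟪z t, L (odeRHS A E (z t) (d t))⟫ + ⟪odeRHS A E (z t) (d t), L (z t)⟫) + ε) t := by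
    intro t ht
    have hz := hode t ht
    have hLz : HasDerivAt (fun u => L (z u)) (L (odeRHS A E (z t) (d t))) t :=
      L.hasFDerivAt.comp_hasDerivAt t hz
    have h1 := hz.inner ℝ hLz
    have h2 : (fun u => lyapV P (z u)) = fun u => (⟪z u, L (z u)⟫ : ℝ) :=
      funext fun u => lyapV_eq_inner P (z u)
    have h3 : HasDerivAt (fun u => lyapV P (z u))
        ((⟪z t, L (odeRHS A E (z t) (d t))⟫ + ⟪odeRHS A E (z t) (d t), L (z t)⟫)) t := by
      rw [h2]; exact h1
    exact h3.add (by simpa using (hasDerivAt_id t).const_mul ε)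
  have hDle : ∀ t, 0 ≤ t →
      ((⟪z t, L (odeRHS A E (z t) (d t))⟫ + ⟪odeRHS A E (z t) (d t), L (z t)⟫) : ℝ) + ε ≤ 0 := by
    intro t ht
    rw [hLdef, deriv_quad_identity P A E hPsym (z t) (d t)]
    have hQbound : α * ‖z t‖ ^ 2 ≤ (z t) ⬝ᵥ (Q *ᵥ (z t)) := by
      rw [hα, lamMin]; exact iInf_le_quadForm hQ.isHermitian (z t)
    have hS : (z t) ⬝ᵥ ((Aᵀ * P + P * A) *ᵥ (z t)) ≤ - ((z t) ⬝ᵥ (Q *ᵥ (z t))) := by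
      have h := hLyap.dotProduct_mulVec_nonneg (z t)
      simp only [Matrix.sub_mulVec, Matrix.neg_mulVec, dotProduct_sub, dotProduct_neg,
        star_trivial] at h
      linarith
    have hcross : (z t) ⬝ᵥ ((P * E) *ᵥ (d t)) ≤ ‖z t‖ * (opPE P E * rbar) := by
      refine le_trans (cross_bound P E (z t) (d t)) ?_
      have h1 := hdbound t ht
      have h2 : (0:ℝ) ≤ opPE P E := norm_nonneg _
      exact mul_le_mul_of_nonneg_left (mul_le_mul_of_nonneg_left h1 h2) (norm_nonneg _)
    have hn := hznorm t ht
    have hkey : (0:ℝ) ≤ α * ((‖z t‖ - s) * (‖z t‖ + s - R)) :=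
      mul_nonneg hα0.le (mul_nonneg (sub_nonneg.2 hn.le) (by linarith))
    have e1 : (z t) ⬝ᵥ ((Aᵀ * P + P * A) *ᵥ (z t)) ≤ -(α * ‖z t‖ ^ 2) := by linarith
    have hn2 : α * R = 2 * opPE P E * rbar := by rw [hαR, hc]
    have e2 : 2 * ((z t) ⬝ᵥ ((P * E) *ᵥ (d t))) ≤ α * R * ‖z t‖ := by
      calc 2 * ((z t) ⬝ᵥ ((P * E) *ᵥ (d t))) ≤ 2 * (‖z t‖ * (opPE P E * rbar)) := by linarith
        _ = α * R * ‖z t‖ := by rw [hn2]; ring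
    nlinarith [e1, e2, hkey]
  have hanti : AntitoneOn (fun u => lyapV P (z u) + ε * u) (Set.Ici (0:ℝ)) := by
    apply antitoneOn_of_deriv_nonpos (convex_Ici 0)
    · intro t ht
      exact (hgder t ht).continuousAt.continuousWithinAt
    · intro t ht
      rw [interior_Ici] at ht
      exact (hgder t ht.le).differentiableAt.differentiableWithinAt
    · intro t ht
      rw [interior_Ici] at ht
      rw [(hgder t ht.le).deriv]
      exact hDle t ht.le
  set T := max 1 ((lyapV P (z 0) + 1 - ρ) / ε) with hTdef
  have hT0 : (0:ℝ) ≤ T := le_trans zero_le_one (le_max_left _ _)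
  have h1 := hanti (Set.mem_Ici.2 le_rfl) (Set.mem_Ici.2 hT0) hT0
  have hεT : lyapV P (z 0) + 1 - ρ ≤ ε * T := by
    have h2 := le_max_right 1 ((lyapV P (z 0) + 1 - ρ) / ε)
    calc lyapV P (z 0) + 1 - ρ = ε * ((lyapV P (z 0) + 1 - ρ) / ε) := by field_simp
      _ ≤ ε * T := mul_le_mul_of_nonneg_left h2 hε0.le
  have h3 := hcon T hT0
  simp only [mul_zero, add_zero] at h1
  linarith
end
end

section
/- (Uniform ultimate boundedness, second part of Theorem 1.) Let z : [0,∞) → ℝ¹⁴ be differentiable and satisfy ż(t) = A z(t) + E d(t) for all t ≥ 0, where ‖d(t)‖ ≤ r̄ for all t ≥ 0. Set α = λ_min(Q), c = 2‖P·E‖, and R = (c/α) r̄. Then the trajectory is uniformly ultimately bounded with ultimate bound proportional to r̄: limsup_{t→∞} ‖z(t)‖ ≤ √(λ_max(P)/λ_min(P)) · R = √(λ_max(P)/λ_min(P)) · (c/α) · r̄. -/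
open Matrix Filter

noncomputable section

section Aux

variable {n : Type*} [Fintype n] [DecidableEq n]

lemma aux_quad_repr (M : Matrix n n ℝ) (hM : M.IsHermitian) (x : n → ℝ) :
    x ⬝ᵥ M.mulVec x = ∑ i, hM.eigenvalues i *
      (((star (hM.eigenvectorUnitary : Matrix n n ℝ)).mulVec x) i)^2 := by
  set U : Matrix n n ℝ := (hM.eigenvectorUnitary : Matrix n n ℝ) with hU
  set y := (star U).mulVec x with hy
  have hspec := hM.spectral_theorem
  have hyv : vecMul x U = y := by
    rw [hy, Matrix.star_eq_conjTranspose, conjTranspose_eq_transpose_of_trivial,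
      ← vecMul_transpose, transpose_transpose]
  calc x ⬝ᵥ M.mulVec x
      = x ⬝ᵥ (U * diagonal (RCLike.ofReal ∘ hM.eigenvalues) * star U).mulVec x := by
        have h2 : M = U * diagonal (RCLike.ofReal ∘ hM.eigenvalues) * star U :=
          hspec.trans (Unitary.conjStarAlgAut_apply _ _)
        exact congrArg (fun N => x ⬝ᵥ N.mulVec x) h2
    _ = y ⬝ᵥ (diagonal (RCLike.ofReal ∘ hM.eigenvalues)).mulVec y := by
        rw [← mulVec_mulVec, ← mulVec_mulVec, dotProduct_mulVec x U, hyv, ← hy]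
    _ = ∑ i, hM.eigenvalues i * (y i)^2 := by
        simp [dotProduct, mulVec_diagonal, pow_two]
        exact Finset.sum_congr rfl (fun i _ => by ring)

lemma aux_sq_sum_eq (M : Matrix n n ℝ) (hM : M.IsHermitian) (x : n → ℝ) :
    ∑ i, (((star (hM.eigenvectorUnitary : Matrix n n ℝ)).mulVec x) i)^2 = x ⬝ᵥ x := by
  set U : Matrix n n ℝ := (hM.eigenvectorUnitary : Matrix n n ℝ) with hU
  set y := (star U).mulVec x with hy
  have h1 : ∑ i, (y i)^2 = y ⬝ᵥ y := by simp [dotProduct, pow_two]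
  rw [h1, hy]
  rw [dotProduct_mulVec, ← mulVec_transpose, mulVec_mulVec,
    Matrix.star_eq_conjTranspose, conjTranspose_eq_transpose_of_trivial, transpose_transpose,
    ← conjTranspose_eq_transpose_of_trivial, ← Matrix.star_eq_conjTranspose]
  rw [(Matrix.mem_unitaryGroup_iff).mp hM.eigenvectorUnitary.2, one_mulVec]

lemma aux_quad_ge [Nonempty n] (M : Matrix n n ℝ) (hM : M.IsHermitian) (x : n → ℝ) :
    (⨅ i, hM.eigenvalues i) * (x ⬝ᵥ x) ≤ x ⬝ᵥ M.mulVec x := by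
  rw [aux_quad_repr M hM x, ← aux_sq_sum_eq M hM x, Finset.mul_sum]
  exact Finset.sum_le_sum fun i _ =>
    mul_le_mul_of_nonneg_right (ciInf_le (Set.Finite.bddBelow (Set.finite_range _)) i)
      (sq_nonneg _)

lemma aux_quad_le [Nonempty n] (M : Matrix n n ℝ) (hM : M.IsHermitian) (x : n → ℝ) :
    x ⬝ᵥ M.mulVec x ≤ (⨆ i, hM.eigenvalues i) * (x ⬝ᵥ x) := by
  rw [aux_quad_repr M hM x, ← aux_sq_sum_eq M hM x, Finset.mul_sum]
  exact Finset.sum_le_sum fun i _ =>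
    mul_le_mul_of_nonneg_right (le_ciSup (Set.Finite.bddAbove (Set.finite_range _)) i)
      (sq_nonneg _)

lemma aux_dot_self (x : EuclideanSpace ℝ n) : (x : n → ℝ) ⬝ᵥ x = ‖x‖^2 := by
  rw [EuclideanSpace.norm_eq, Real.sq_sqrt (by positivity)]
  simp [dotProduct, Real.norm_eq_abs, sq_abs, pow_two]

end Aux

lemma aux_dot1 {m : Type*} [Fintype m] (A P : Matrix m m ℝ) (x : m → ℝ) :
    (A.mulVec x) ⬝ᵥ (P.mulVec x) = x ⬝ᵥ ((Aᵀ * P).mulVec x) := by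
  rw [← vecMul_transpose, dotProduct_mulVec, dotProduct_mulVec, vecMul_vecMul]

lemma aux_dot2 {m k : Type*} [Fintype m] [Fintype k] (P : Matrix m m ℝ) (hsym : Pᵀ = P)
    (E : Matrix m k ℝ) (x : m → ℝ) (v : k → ℝ) :
    (E.mulVec v) ⬝ᵥ (P.mulVec x) = x ⬝ᵥ ((P * E).mulVec v) := by
  rw [dotProduct_comm, ← hsym, ← vecMul_transpose, transpose_transpose,
    ← dotProduct_mulVec x P, hsym, ← mulVec_mulVec]

lemma aux_cross_bound (P : Matrix (Fin 14) (Fin 14) ℝ) (E : Matrix (Fin 14) (Fin 3) ℝ)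
    (x : V14) (v : V3) :
    (x : Fin 14 → ℝ) ⬝ᵥ (P * E).mulVec v ≤ opPE P E * (‖v‖ * ‖x‖) := by
  have h : (x : Fin 14 → ℝ) ⬝ᵥ (P * E).mulVec v
      = inner (𝕜 := ℝ) x (LinearMap.toContinuousLinearMap (Matrix.toEuclideanLin (P * E)) v) := by
    rw [EuclideanSpace.inner_eq_star_dotProduct, star_trivial, dotProduct_comm]
    rfl
  rw [h]
  calc inner (𝕜 := ℝ) x (LinearMap.toContinuousLinearMap (Matrix.toEuclideanLin (P * E)) v)
      ≤ ‖x‖ * ‖LinearMap.toContinuousLinearMap (Matrix.toEuclideanLin (P * E)) v‖ :=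
        real_inner_le_norm _ _
    _ ≤ ‖x‖ * (opPE P E * ‖v‖) :=
        mul_le_mul_of_nonneg_left (ContinuousLinearMap.le_opNorm _ _) (norm_nonneg _)
    _ = opPE P E * (‖v‖ * ‖x‖) := by ring

set_option maxHeartbeats 2000000 in
/-- **Uniform ultimate boundedness, second part of Theorem 1.**
With `α = λ_min(Q)`, `c = 2‖P·E‖`, `R = (c/α) r̄`: the trajectory is uniformly
ultimately bounded with ultimate bound proportional to `r̄`:
`limsup_{t→∞} ‖z(t)‖ ≤ √(λ_max(P)/λ_min(P)) · R = √(λ_max(P)/λ_min(P)) · (c/α) · r̄`. -/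
theorem stmt8
    (A : Matrix (Fin 14) (Fin 14) ℝ) (E : Matrix (Fin 14) (Fin 3) ℝ)
    (P Q : Matrix (Fin 14) (Fin 14) ℝ) (hP : P.PosDef) (hQ : Q.PosDef)
    (hLyap : (-Q - (Aᵀ * P + P * A)).PosSemidef)
    (rbar : ℝ) (hrbar : 0 ≤ rbar)
    (d : ℝ → V3) (hd : Continuous d) (hdbound : ∀ t, 0 ≤ t → ‖d t‖ ≤ rbar)
    (z : ℝ → V14)
    (hode : ∀ t, 0 ≤ t → HasDerivAt z (odeRHS A E (z t) (d t)) t)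
    (α c R : ℝ)
    (hα : α = lamMin Q hQ.isHermitian) (hc : c = 2 * opPE P E)
    (hR : R = (c / α) * rbar) :
    Filter.limsup (fun t => ‖z t‖) Filter.atTop
      ≤ Real.sqrt (lamMax P hP.isHermitian / lamMin P hP.isHermitian) * R := by
  -- positivity of relevant constants
  have hα0 : 0 < α := by
    rw [hα, lamMin]
    obtain ⟨i, hi⟩ := exists_eq_ciInf_of_finite (f := hQ.isHermitian.eigenvalues)
    rw [← hi]; exact hQ.eigenvalues_pos i
  have hlmin : 0 < lamMin P hP.isHermitian := by
    rw [lamMin]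
    obtain ⟨i, hi⟩ := exists_eq_ciInf_of_finite (f := hP.isHermitian.eigenvalues)
    rw [← hi]; exact hP.eigenvalues_pos i
  have hlmax : 0 < lamMax P hP.isHermitian :=
    lt_of_lt_of_le (hP.eigenvalues_pos ⟨0, by norm_num⟩)
      (le_ciSup (Set.Finite.bddAbove (Set.finite_range _)) _)
  have hc0 : 0 ≤ c := by rw [hc, opPE]; positivity
  have hR0 : 0 ≤ R := by rw [hR]; positivity
  set lmin := lamMin P hP.isHermitian
  set lmax := lamMax P hP.isHermitian
  -- the Lyapunov function along the trajectory, and its derivative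
  set W : ℝ → ℝ := fun t => lyapV P (z t) with hWdef
  set Wd : ℝ → ℝ := fun t =>
    (z t : Fin 14 → ℝ) ⬝ᵥ P.mulVec (odeRHS A E (z t) (d t))
      + (odeRHS A E (z t) (d t) : Fin 14 → ℝ) ⬝ᵥ P.mulVec (z t) with hWddef
  have hW : ∀ t, 0 ≤ t → HasDerivAt W (Wd t) t := by
    intro t ht
    have hz := hode t ht
    have hLz : HasDerivAt (fun s => (LinearMap.toContinuousLinearMap (Matrix.toEuclideanLin P))
        (z s)) ((LinearMap.toContinuousLinearMap (Matrix.toEuclideanLin P))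
        (odeRHS A E (z t) (d t))) t :=
      (LinearMap.toContinuousLinearMap (Matrix.toEuclideanLin P)).hasFDerivAt.comp_hasDerivAt t hz
    have := HasDerivAt.inner ℝ hz hLz
    have e1 : W = fun s => inner ℝ (z s)
        ((LinearMap.toContinuousLinearMap (Matrix.toEuclideanLin P)) (z s)) := by
      funext s
      rw [hWdef, EuclideanSpace.inner_eq_star_dotProduct, star_trivial, dotProduct_comm]
      rfl
    have e2 : Wd t = inner ℝ (z t) ((LinearMap.toContinuousLinearMap (toEuclideanLin P))
        (odeRHS A E (z t) (d t))) + inner ℝ (odeRHS A E (z t) (d t))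
        ((LinearMap.toContinuousLinearMap (toEuclideanLin P)) (z t)) := by
      rw [hWddef, EuclideanSpace.inner_eq_star_dotProduct, EuclideanSpace.inner_eq_star_dotProduct,
        star_trivial, star_trivial, dotProduct_comm,
        dotProduct_comm ((LinearMap.toContinuousLinearMap (toEuclideanLin P)) (z t)).ofLp]
      rfl
    rw [e1, e2]
    exact this
  -- derivative bound
  have hPsym : Pᵀ = P := by
    have := hP.isHermitian
    rwa [Matrix.IsHermitian, conjTranspose_eq_transpose_of_trivial] at this
  have hWb : ∀ t, 0 ≤ t → Wd t ≤ -(α/2) * ‖z t‖^2 + (c*rbar)^2/(2*α) := by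
    intro t ht
    have hdecomp : Wd t = (z t : Fin 14 → ℝ) ⬝ᵥ ((Aᵀ * P + P * A).mulVec (z t))
        + 2 * ((z t : Fin 14 → ℝ) ⬝ᵥ ((P * E).mulVec (d t))) := by
      show (z t : Fin 14 → ℝ) ⬝ᵥ P.mulVec (A.mulVec (z t) + E.mulVec (d t))
          + ((A.mulVec (z t) + E.mulVec (d t)) ⬝ᵥ P.mulVec (z t)) = _
      rw [mulVec_add, dotProduct_add, add_dotProduct, aux_dot1, aux_dot2 P hPsym,
        add_mulVec, dotProduct_add]
      simp only [mulVec_mulVec]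
      ring
    have hLyapIneq : (z t : Fin 14 → ℝ) ⬝ᵥ ((Aᵀ * P + P * A).mulVec (z t))
        ≤ -((z t : Fin 14 → ℝ) ⬝ᵥ (Q.mulVec (z t))) := by
      have h0 := hLyap.re_dotProduct_nonneg (z t)
      simp only [RCLike.re_to_real, sub_mulVec, neg_mulVec, dotProduct_sub, dotProduct_neg,
        star_trivial] at h0
      linarith
    have hQb : α * ‖z t‖^2 ≤ (z t : Fin 14 → ℝ) ⬝ᵥ (Q.mulVec (z t)) := by
      rw [hα, ← aux_dot_self (z t)]
      exact aux_quad_ge Q hQ.isHermitian (z t)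
    have hcross : (z t : Fin 14 → ℝ) ⬝ᵥ ((P * E).mulVec (d t)) ≤ opPE P E * (rbar * ‖z t‖) := by
      refine le_trans (aux_cross_bound P E (z t) (d t)) ?_
      have h1 : (0:ℝ) ≤ opPE P E := norm_nonneg _
      have h2 := hdbound t ht
      have h3 : (0:ℝ) ≤ ‖z t‖ := norm_nonneg _
      gcongr
    rw [hdecomp, hc]
    have key : (2*opPE P E*rbar*‖z t‖ - (α/2)*‖z t‖^2) * (2*α) ≤ (2*opPE P E*rbar)^2 := by
      nlinarith [sq_nonneg (α*‖z t‖ - 2*opPE P E*rbar), hα0, norm_nonneg (z t)]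
    have key2 : 2*opPE P E*rbar*‖z t‖ - (α/2)*‖z t‖^2 ≤ (2*opPE P E*rbar)^2/(2*α) := by
      rw [le_div_iff₀ (by positivity)]
      exact key
    linarith
  -- W is squeezed between lmin‖z‖² and lmax‖z‖²
  have hWlow : ∀ t, lmin * ‖z t‖^2 ≤ W t := by
    intro t
    rw [← aux_dot_self (z t)]
    exact aux_quad_ge P hP.isHermitian (z t)
  have hWhigh : ∀ t, W t ≤ lmax * ‖z t‖^2 := by
    intro t
    have := aux_quad_le P hP.isHermitian (z t)
    rwa [aux_dot_self (z t)] at this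
  set K : ℝ := (c*rbar)^2/(2*α) with hK
  set β : ℝ := α/(2*lmax) with hβ
  have hβ0 : 0 < β := by positivity
  have hK0 : 0 ≤ K := by positivity
  clear_value lmin lmax W Wd K β
  have hWb2 : ∀ t, 0 ≤ t → Wd t ≤ -β * W t + K := by
    intro t ht
    have h1 := hWb t ht
    have h2 := hWhigh t
    have h3 : β * W t ≤ β * (lmax * ‖z t‖^2) := by nlinarith
    have h4 : β * (lmax * ‖z t‖^2) = (α/2) * ‖z t‖^2 := by
      rw [hβ]; field_simp
    nlinarith [h1, h3, h4]
  -- the comparison function G is antitone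
  set G : ℝ → ℝ := fun t => (W t - K/β) * Real.exp (β*t) with hG
  have hGd : ∀ t, 0 ≤ t → HasDerivAt G
      (Wd t * Real.exp (β*t) + (W t - K/β) * (Real.exp (β*t) * β)) t := by
    intro t ht
    have h := ((hW t ht).sub_const (K/β)).mul (((hasDerivAt_id t).const_mul β).exp)
    simp only [id] at h
    exact h.congr_deriv (by ring)
  have hanti : AntitoneOn G (Set.Ici 0) := by
    apply antitoneOn_of_deriv_nonpos (convex_Ici 0)
    · exact fun t ht => ((hGd t ht).continuousAt).continuousWithinAt
    · intro t ht
      rw [interior_Ici] at ht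
      exact ((hGd t (le_of_lt ht)).differentiableAt).differentiableWithinAt
    · intro t ht
      rw [interior_Ici] at ht
      rw [(hGd t (le_of_lt ht)).deriv]
      have h1 := hWb2 t (le_of_lt ht)
      have h2 : (0:ℝ) < Real.exp (β*t) := Real.exp_pos _
      have h3 : (K/β) * β = K := by field_simp
      nlinarith
  have hbound : ∀ t, 0 ≤ t → W t ≤ (W 0 - K/β) * Real.exp (-(β*t)) + K/β := by
    intro t ht
    have h1 : G t ≤ G 0 := hanti (Set.self_mem_Ici) ht ht
    rw [hG] at h1
    simp only [mul_zero, Real.exp_zero, mul_one] at h1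
    have h2 : (0:ℝ) < Real.exp (β*t) := Real.exp_pos _
    have h3 : W t - K/β ≤ (W 0 - K/β) * Real.exp (-(β*t)) := by
      rw [Real.exp_neg]
      rw [← le_div_iff₀ h2] at h1
      rwa [div_eq_mul_inv] at h1
    linarith
  -- limit of the bound
  have htend : Tendsto (fun t => (W 0 - K/β) * Real.exp (-(β*t)) + K/β) atTop
      (nhds (K/β)) := by
    have h1 : Tendsto (fun t : ℝ => β * t) atTop atTop :=
      Tendsto.const_mul_atTop hβ0 tendsto_id
    have h2 : Tendsto (fun t : ℝ => -(β*t)) atTop atBot := tendsto_neg_atTop_atBot.comp h1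
    have h3 : Tendsto (fun t : ℝ => Real.exp (-(β*t))) atTop (nhds 0) :=
      Real.tendsto_exp_atBot.comp h2
    have h4 := (h3.const_mul (W 0 - K/β)).add_const (K/β)
    simpa using h4
  have hKβ : K/β = lmax * R^2 := by
    rw [hK, hβ, hR]
    field_simp
  set Mb := Real.sqrt (lmax/lmin) * R with hMbdef
  have hMb0 : 0 ≤ Mb := mul_nonneg (Real.sqrt_nonneg _) hR0
  have hMbsq : Mb^2 = (lmax/lmin) * R^2 := by
    rw [hMbdef, mul_pow, Real.sq_sqrt (le_of_lt (div_pos hlmax hlmin))]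
  clear_value Mb
  refine le_of_forall_gt_imp_ge_of_dense ?_
  intro b hb
  have hb0 : 0 < b := lt_of_le_of_lt hMb0 hb
  have hsq : Mb^2 < b^2 := by nlinarith
  obtain ⟨ε, hε, hε0⟩ : ∃ ε : ℝ, ε = lmin * (b^2 - Mb^2) ∧ 0 < ε :=
    ⟨_, rfl, by nlinarith⟩
  have hev1 : ∀ᶠ t in atTop, (W 0 - K/β) * Real.exp (-(β*t)) + K/β < K/β + ε :=
    htend.eventually (gt_mem_nhds (lt_add_of_pos_right _ hε0))
  have hev2 : ∀ᶠ t : ℝ in atTop, (0:ℝ) ≤ t := eventually_ge_atTop 0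
  have hev : ∀ᶠ t in atTop, ‖z t‖ ≤ b := by
    filter_upwards [hev1, hev2] with t h1 h2
    have h3 : W t < K/β + ε := lt_of_le_of_lt (hbound t h2) h1
    have h4 : lmin * ‖z t‖^2 ≤ W t := hWlow t
    have h6 : lmin * Mb^2 = lmax * R^2 := by
      rw [hMbsq]; field_simp
    have h5 : ‖z t‖^2 ≤ b^2 := by
      have h7 : K/β + ε = lmin * b^2 := by rw [hKβ, hε]; linarith
      nlinarith
    calc ‖z t‖ = Real.sqrt (‖z t‖^2) := (Real.sqrt_sq (norm_nonneg _)).symm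
      _ ≤ Real.sqrt (b^2) := Real.sqrt_le_sqrt h5
      _ = b := Real.sqrt_sq hb0.le
  exact limsup_le_of_le (isCoboundedUnder_le_of_le atTop (fun t => norm_nonneg (z t))) hev
end
end
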